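/- There exists an integer N such that for every simple graph G on n ≥ N vertices whose adjacency-matrix spectral radius μ(G) satisfies μ(G) > sqrt(⌊n²/4⌋), the graph G contains a cycle of length t for every integer t with 3 ≤ t ≤ n/160. -/

import Mathlib

open Classical in
/-- `specRad G` is `μ(G)`, the largest eigenvalue of the adjacency matrix of `G`
(the supremum of the real spectrum of the adjacency matrix). -/
noncomputable def specRad {V : Type*} [Fintype V] [DecidableEq V] (G : SimpleGraph V) : ℝ :=
  sSup (spectrum ℝ (SimpleGraph.adjMatrix ℝ G))


open Finset Matrix in
lemma step1 {n : ℕ} (hn : 1 ≤ n) (G : SimpleGraph (Fin n)) [DecidableRel G.Adj]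
    (h : Real.sqrt ((n ^ 2 / 4 : ℕ) : ℝ) < specRad G) :
    ∃ w : Fin n, (n ^ 2 / 4 + 1 : ℕ) ≤ ∑ u ∈ G.neighborFinset w, G.degree u := by
  classical
  set A := SimpleGraph.adjMatrix ℝ G with hA
  have heq : specRad G = sSup (spectrum ℝ A) := by
    unfold specRad
    congr!
  rw [heq] at h
  have hne : (spectrum ℝ A).Nonempty := by
    by_contra hemp
    rw [Set.not_nonempty_iff_eq_empty] at hemp
    rw [hemp, Real.sSup_empty] at h
    exact absurd h (not_lt.mpr (Real.sqrt_nonneg _))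
  obtain ⟨lam, hlam, hgt⟩ := exists_lt_of_lt_csSup hne h
  have hspec : lam ∈ spectrum ℝ (Matrix.toLinAlgEquiv' A) := by
    rwa [AlgEquiv.spectrum_eq]
  have hev : Module.End.HasEigenvalue (Matrix.toLinAlgEquiv' A) lam :=
    Module.End.hasEigenvalue_iff_mem_spectrum.mpr hspec
  obtain ⟨x, hx⟩ := hev.exists_hasEigenvector
  have hxa : ∀ v, ∑ u ∈ G.neighborFinset v, x u = lam * x v := by
    intro v
    have h2 : A *ᵥ x = lam • x := by
      rw [← Matrix.toLinAlgEquiv'_apply, hx.apply_eq_smul]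
    have h3 := congrFun h2 v
    rw [hA] at h3
    rw [SimpleGraph.adjMatrix_mulVec_apply] at h3
    simpa using h3
  -- pick maximizing coordinate
  obtain ⟨w, -, hw⟩ := Finset.exists_max_image (univ : Finset (Fin n)) (fun v => |x v|)
    ⟨⟨0, hn⟩, mem_univ _⟩
  have hw' : ∀ v, |x v| ≤ |x w| := fun v => hw v (mem_univ v)
  have hxw : 0 < |x w| := by
    obtain ⟨v, hv⟩ := Function.ne_iff.mp hx.right
    exact lt_of_lt_of_le (abs_pos.mpr hv) (hw' v)
  -- key inequality
  have key : lam ^ 2 * |x w| ≤ (∑ u ∈ G.neighborFinset w, (G.degree u : ℝ)) * |x w| := by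
    have e1 : lam ^ 2 * x w = ∑ u ∈ G.neighborFinset w, ∑ v ∈ G.neighborFinset u, x v := by
      rw [Finset.sum_congr rfl (fun u _ => hxa u)]
      rw [← Finset.mul_sum, hxa w]; ring
    calc lam ^ 2 * |x w| = |lam ^ 2 * x w| := by
          rw [abs_mul, abs_of_nonneg (sq_nonneg lam)]
      _ = |∑ u ∈ G.neighborFinset w, ∑ v ∈ G.neighborFinset u, x v| := by rw [e1]
      _ ≤ ∑ u ∈ G.neighborFinset w, |∑ v ∈ G.neighborFinset u, x v| :=
          Finset.abs_sum_le_sum_abs _ _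
      _ ≤ ∑ u ∈ G.neighborFinset w, (G.degree u : ℝ) * |x w| := by
          refine Finset.sum_le_sum (fun u _ => ?_)
          calc |∑ v ∈ G.neighborFinset u, x v| ≤ ∑ v ∈ G.neighborFinset u, |x v| :=
                Finset.abs_sum_le_sum_abs _ _
            _ ≤ ∑ v ∈ G.neighborFinset u, |x w| := Finset.sum_le_sum (fun v _ => hw' v)
            _ = (G.degree u : ℝ) * |x w| := by
                rw [Finset.sum_const, SimpleGraph.card_neighborFinset_eq_degree]
                simp [nsmul_eq_mul]
      _ = (∑ u ∈ G.neighborFinset w, (G.degree u : ℝ)) * |x w| := by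
          rw [Finset.sum_mul]
  have key2 : lam ^ 2 ≤ ∑ u ∈ G.neighborFinset w, (G.degree u : ℝ) :=
    le_of_mul_le_mul_right key hxw
  have hc : ((n ^ 2 / 4 : ℕ) : ℝ) < lam ^ 2 := by
    have h0 : (0:ℝ) ≤ Real.sqrt ((n ^ 2 / 4 : ℕ) : ℝ) := Real.sqrt_nonneg _
    nlinarith [Real.sq_sqrt (by positivity : ((n ^ 2 / 4 : ℕ):ℝ) ≥ 0)]
  have : ((n ^ 2 / 4 : ℕ) : ℝ) < ((∑ u ∈ G.neighborFinset w, G.degree u : ℕ) : ℝ) := by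
    rw [Nat.cast_sum]
    exact lt_of_lt_of_le hc key2
  exact ⟨w, Nat.succ_le_of_lt (Nat.cast_lt.mp this)⟩

section Lists
open Finset List SimpleGraph

variable {V : Type*} {G : SimpleGraph V}

lemma walk_of_chain (G : SimpleGraph V) :
    ∀ (l : List V) (hl : l ≠ []), l.Chain' G.Adj →
    ∃ p : G.Walk (l.head hl) (l.getLast hl), p.support = l ∧
      p.edges = List.zipWith (fun a b => s(a, b)) l l.tail ∧ p.length + 1 = l.length
  | [a], _, _ => ⟨SimpleGraph.Walk.nil, by simp, by simp, by simp⟩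
  | a :: b :: r, _, hch => by
    obtain ⟨hab, hch'⟩ := List.isChain_cons_cons.mp hch
    obtain ⟨p, hs, he, hlen⟩ := walk_of_chain G (b :: r) (by simp) hch'
    have hlast : (b :: r).getLast (by simp) = (a :: b :: r).getLast (by simp) :=
      (List.getLast_cons (by simp)).symm
    refine ⟨(SimpleGraph.Walk.cons hab p).copy rfl hlast, ?_, ?_, ?_⟩
    · refine (SimpleGraph.Walk.support_copy _ _ _).trans ?_
      exact (SimpleGraph.Walk.support_cons _ _).trans (congrArg (a :: ·) hs)
    · refine (SimpleGraph.Walk.edges_copy _ _ _).trans ?_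
      refine (SimpleGraph.Walk.edges_cons _ _).trans ((congrArg (s(a, b) :: ·) he).trans ?_)
      simp
    · refine (congrArg (· + 1) ((SimpleGraph.Walk.length_copy _ _ _).trans (SimpleGraph.Walk.length_cons _ _))).trans ?_
      simpa using hlen

lemma exists_cycle_of_list (G : SimpleGraph V) (l : List V) (hnd : l.Nodup)
    (hlen : 3 ≤ l.length) (hch : l.Chain' G.Adj)
    (hne : l ≠ [])
    (hcl : G.Adj (l.getLast hne) (l.head hne)) :
    ∃ (v : V) (c : G.Walk v v), c.IsCycle ∧ c.length = l.length := by
  obtain ⟨p, hs, he, hplen⟩ := walk_of_chain G l hne hch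
  have hEl : (List.zipWith (fun a b => s(a, b)) l l.tail).length = l.length - 1 := by
    rw [List.length_zipWith, List.length_tail]; omega
  have hget : ∀ (i : ℕ) (h : i < (List.zipWith (fun a b => s(a, b)) l l.tail).length),
      (List.zipWith (fun a b => s(a, b)) l l.tail)[i]'h =
      s(l[i]'(by omega), l[i + 1]'(by omega)) := by
    intro i h
    simp [List.getElem_zipWith, List.getElem_tail]
  have hinj : ∀ (i j : ℕ) (hi : i < l.length) (hj : j < l.length),
      l[i]'hi = l[j]'hj → i = j := by
    intro i j hi hj hij
    have := List.nodup_iff_injective_getElem.mp hnd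
      (a₁ := ⟨i, hi⟩) (a₂ := ⟨j, hj⟩) hij
    simpa using this
  have hlast : l.getLast hne = l[l.length - 1]'(by omega) := List.getLast_eq_getElem hne
  have hhead : l.head hne = l[0]'(by omega) := List.head_eq_getElem hne
  let c := p.concat hcl
  have hclen : c.length = l.length := by
    show (p.concat hcl).length = l.length
    rw [SimpleGraph.Walk.length_concat]
    omega
  refine ⟨l.head hne, c, ⟨⟨⟨?_⟩, ?_⟩, ?_⟩, hclen⟩
  · -- edges nodup
    show c.edges.Nodup
    have hce : c.edges = (List.zipWith (fun a b => s(a, b)) l l.tail).concat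
        (s(l.getLast hne, l.head hne)) := by
      rw [SimpleGraph.Walk.edges_concat, he]
    rw [hce, List.concat_eq_append, List.nodup_append']
    refine ⟨?_, List.nodup_singleton _, ?_⟩
    · rw [List.nodup_iff_injective_getElem]
      rintro ⟨i, hi⟩ ⟨j, hj⟩ hij
      simp only at hij
      rw [hget i hi, hget j hj, Sym2.eq_iff] at hij
      have hi' : i < l.length := by omega
      have hj' : j < l.length := by omega
      rcases hij with ⟨h1, h2⟩ | ⟨h1, h2⟩
      · exact Fin.ext (hinj _ _ _ _ h1)
      · have e1 := hinj _ _ _ _ h1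
        have e2 := hinj _ _ _ _ h2
        exact Fin.ext (by omega)
    · simp only [List.disjoint_singleton]
      intro hmem
      obtain ⟨i, hi, hiE⟩ := List.mem_iff_getElem.mp hmem
      rw [hget i hi, Sym2.eq_iff] at hiE
      rcases hiE with ⟨h1, h2⟩ | ⟨h1, h2⟩
      · have := hinj _ _ _ _ (h1.trans hlast)
        omega
      · have e1 := hinj _ _ _ _ (h1.trans hhead)
        have e2 := hinj _ _ _ _ (h2.trans hlast)
        omega
  · -- c ≠ nil
    intro hnil
    have : c.length = 0 := by rw [hnil]; rfl
    omega
  · -- support tail nodup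
    show c.support.tail.Nodup
    have hcs : c.support = l.concat (l.head hne) := by
      rw [SimpleGraph.Walk.support_concat, hs, List.concat_eq_append]
    rw [hcs]
    cases l with
    | nil => exact absurd rfl hne
    | cons a t =>
      simp only [List.concat_eq_append, List.cons_append, List.tail_cons]
      rw [List.nodup_append']
      rw [List.nodup_cons] at hnd
      refine ⟨hnd.2, List.nodup_singleton _, ?_⟩
      simp only [List.disjoint_singleton]
      simpa using hnd.1

end Lists

section Greedy
open Finset List SimpleGraph

variable {V : Type*} [Fintype V] [DecidableEq V] {G : SimpleGraph V} [DecidableRel G.Adj]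

lemma card_inter_nbr (G : SimpleGraph V) [DecidableRel G.Adj] (U : Finset V) (u : V) :
    (U ∩ G.neighborFinset u).card = ∑ v ∈ U, (if G.Adj u v then 1 else 0) := by
  rw [← Finset.card_filter]
  congr 1
  ext v
  simp [SimpleGraph.mem_neighborFinset, Finset.mem_filter, Finset.mem_inter]

lemma exists_path_list (U : Finset V) (c : ℕ)
    (hU : ∀ u ∈ U, c ≤ (U ∩ G.neighborFinset u).card) (hUne : U.Nonempty) :
    ∀ r : ℕ, 1 ≤ r → r ≤ c + 1 →
    ∃ (a : V) (l : List V), (a :: l).Nodup ∧ (a :: l).length = r ∧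
      (a :: l).Chain' G.Adj ∧ ∀ v ∈ a :: l, v ∈ U := by
  intro r
  induction r with
  | zero => omega
  | succ r ih =>
    intro _ hr
    by_cases hr1 : r = 0
    · subst hr1
      obtain ⟨u₀, hu₀⟩ := hUne
      exact ⟨u₀, [], by simp, rfl, List.isChain_singleton _, by simpa using hu₀⟩
    · obtain ⟨a, l, hnd, hlen, hch, hmem⟩ := ih (by omega) (by omega)
      rw [List.length_cons] at hlen
      -- extend at the front
      have haU : a ∈ U := hmem a (by simp)
      have hcard : c ≤ (U ∩ G.neighborFinset a).card := hU a haU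
      have hlc : ((a :: l).toFinset).card ≤ r := by
        calc ((a :: l).toFinset).card ≤ (a :: l).length := List.toFinset_card_le _
          _ = r := hlen
      have hbig : 1 ≤ ((U ∩ G.neighborFinset a) \ (a :: l).toFinset).card := by
        have hanot : a ∉ U ∩ G.neighborFinset a := by
          simp [SimpleGraph.mem_neighborFinset]
        have hsub : (U ∩ G.neighborFinset a) \ (a :: l).toFinset =
            (U ∩ G.neighborFinset a) \ l.toFinset := by
          ext v
          simp only [Finset.mem_sdiff, List.toFinset_cons, Finset.mem_insert]
          constructor
          · rintro ⟨hs, h2⟩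
            push_neg at h2
            exact ⟨hs, h2.2⟩
          · rintro ⟨hs, h2⟩
            refine ⟨hs, ?_⟩
            push_neg
            refine ⟨?_, h2⟩
            rintro rfl
            exact hanot hs
        have h1 : (U ∩ G.neighborFinset a).card ≤
            ((U ∩ G.neighborFinset a) \ l.toFinset).card + l.toFinset.card :=
          Finset.card_le_card_sdiff_add_card
        have h3 : l.toFinset.card ≤ l.length := List.toFinset_card_le _
        rw [hsub]
        omega
      obtain ⟨u, hu⟩ := Finset.card_pos.mp (show 0 < ((U ∩ G.neighborFinset a) \ (a :: l).toFinset).card by omega)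
      rw [Finset.mem_sdiff, Finset.mem_inter] at hu
      refine ⟨u, a :: l, ?_, by simpa using hlen, ?_, ?_⟩
      · rw [List.nodup_cons]
        exact ⟨fun h => hu.2 (List.mem_toFinset.mpr h), hnd⟩
      · apply List.isChain_cons_cons.mpr
        exact ⟨G.adj_symm ((SimpleGraph.mem_neighborFinset _ _ _).mp hu.1.2), hch⟩
      · intro v hv
        rcases List.mem_cons.mp hv with h | h
        · exact h ▸ hu.1.1
        · exact hmem v h

lemma exists_min_deg_subset (G : SimpleGraph V) [DecidableRel G.Adj] (c : ℕ) :
    ∀ U : Finset V, 2 * c * U.card + 2 ≤ ∑ u ∈ U, (U ∩ G.neighborFinset u).card →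
    ∃ W, W ⊆ U ∧ W.Nonempty ∧ ∀ u ∈ W, c ≤ (W ∩ G.neighborFinset u).card := by
  intro U
  induction U using Finset.strongInduction with
  | _ U ih =>
    intro hsum
    by_cases hall : ∀ u ∈ U, c ≤ (U ∩ G.neighborFinset u).card
    · have hne : U.Nonempty := by
        rcases Finset.eq_empty_or_nonempty U with rfl | h
        · simp at hsum
        · exact h
      exact ⟨U, subset_rfl, hne, hall⟩
    · push_neg at hall
      obtain ⟨u₀, hu₀U, hu₀⟩ := hall
      set U' := U.erase u₀ with hU'
      have hcard : U'.card + 1 = U.card := by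
        rw [hU', Finset.card_erase_of_mem hu₀U]
        have := Finset.card_pos.mpr ⟨u₀, hu₀U⟩
        omega
      -- sum identities
      have key1 : ∀ u : V, (U' ∩ G.neighborFinset u).card + (if G.Adj u u₀ then 1 else 0)
          = (U ∩ G.neighborFinset u).card := by
        intro u
        rw [card_inter_nbr G U' u, card_inter_nbr G U u]
        exact Finset.sum_erase_add U _ hu₀U
      have key2 : (∑ u ∈ U', (U' ∩ G.neighborFinset u).card)
            + (∑ u ∈ U', if G.Adj u u₀ then 1 else 0)
          = ∑ u ∈ U', (U ∩ G.neighborFinset u).card := by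
        rw [← Finset.sum_add_distrib]
        exact Finset.sum_congr rfl fun u _ => key1 u
      have key3 : (∑ u ∈ U', (U ∩ G.neighborFinset u).card) + (U ∩ G.neighborFinset u₀).card
          = ∑ u ∈ U, (U ∩ G.neighborFinset u).card :=
        Finset.sum_erase_add U _ hu₀U
      have key4 : (∑ u ∈ U', if G.Adj u u₀ then 1 else 0) ≤ (U ∩ G.neighborFinset u₀).card := by
        rw [card_inter_nbr G U u₀]
        calc (∑ u ∈ U', if G.Adj u u₀ then 1 else 0)
            ≤ ∑ u ∈ U, if G.Adj u u₀ then 1 else 0 :=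
              Finset.sum_le_sum_of_subset (Finset.erase_subset _ _)
          _ = ∑ u ∈ U, if G.Adj u₀ u then 1 else 0 := by
              refine Finset.sum_congr rfl fun u _ => ?_
              by_cases h : G.Adj u u₀
              · simp [h, G.adj_symm h]
              · have h' : ¬ G.Adj u₀ u := fun hh => h (G.adj_symm hh)
                simp [h, h']
      have inv : 2 * c * U'.card + 2 ≤ ∑ u ∈ U', (U' ∩ G.neighborFinset u).card := by
        have e1 : 2 * c * U.card = 2 * c * U'.card + 2 * c := by
          rw [← hcard]; ring
        have hc1 : (U ∩ G.neighborFinset u₀).card + 1 ≤ c := hu₀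
        rw [e1] at hsum
        linarith
      obtain ⟨W, hWs, hWne, hWd⟩ := ih U' (Finset.erase_ssubset hu₀U) inv
      exact ⟨W, hWs.trans (Finset.erase_subset _ _), hWne, hWd⟩

lemma pick_common (Y A B F : Finset V) (β γ : ℕ)
    (h1 : (Y \ A).card ≤ β) (h2 : (Y \ B).card ≤ β) (h3 : F.card ≤ γ)
    (hY : 2 * β + γ + 1 ≤ Y.card) :
    ∃ y, y ∈ Y ∧ y ∈ A ∧ y ∈ B ∧ y ∉ F := by
  have hsub : Y ⊆ ((Y ∩ A ∩ B) \ F) ∪ ((Y \ A) ∪ ((Y \ B) ∪ F)) := by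
    intro v hv
    simp only [Finset.mem_union, Finset.mem_sdiff, Finset.mem_inter]
    by_cases hA : v ∈ A
    · by_cases hB : v ∈ B
      · by_cases hF : v ∈ F
        · tauto
        · tauto
      · tauto
    · tauto
  have hcard : Y.card ≤ ((Y ∩ A ∩ B) \ F).card + ((Y \ A).card + ((Y \ B).card + F.card)) := by
    refine le_trans (Finset.card_le_card hsub) ?_
    refine le_trans (Finset.card_union_le _ _) ?_
    have := Finset.card_union_le (Y \ A) ((Y \ B) ∪ F)
    have := Finset.card_union_le (Y \ B) F
    omega
  have hpos : 0 < ((Y ∩ A ∩ B) \ F).card := by omega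
  obtain ⟨y, hy⟩ := Finset.card_pos.mp hpos
  rw [Finset.mem_sdiff, Finset.mem_inter, Finset.mem_inter] at hy
  exact ⟨y, hy.1.1.1, hy.1.1.2, hy.1.2, hy.2⟩

lemma connector (X Y : Finset V) (β γ : ℕ)
    (hXY : Disjoint X Y)
    (hX : ∀ x ∈ X, (Y \ G.neighborFinset x).card ≤ β)
    (hY : ∀ y ∈ Y, (X \ G.neighborFinset y).card ≤ β)
    (hYc : 2 * β + γ + 1 ≤ Y.card)
    (hXc : 2 * β + γ + 1 ≤ X.card) :
    ∀ j : ℕ, 1 ≤ j → ∀ F : Finset V, ∀ x x', x ∈ X → x' ∈ X → x ≠ x' →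
      x ∉ F → x' ∉ F → F.card + 2 * j ≤ γ →
      ∃ l : List V, l.Chain' G.Adj ∧ l.Nodup ∧ l.length = 2 * j + 1 ∧
        l.head? = some x ∧ l.getLast? = some x' ∧
        ∀ v ∈ l, (v ∈ X ∨ v ∈ Y) ∧ v ∉ F := by
  intro j
  induction j with
  | zero => omega
  | succ j ihj =>
    intro _ F x x' hx hx' hxx' hxF hx'F hbud
    have hne : ∀ {a b : V}, a ∈ X → b ∈ Y → a ≠ b := by
      intro a b ha hb h
      exact (Finset.disjoint_left.mp hXY ha) (h ▸ hb)
    by_cases hj : j = 0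
    · subst hj
      obtain ⟨y, hyY, hyA, hyB, hyF⟩ := pick_common Y (G.neighborFinset x)
        (G.neighborFinset x') F β γ (hX x hx) (hX x' hx') (by omega) hYc
      refine ⟨[x, y, x'], ?_, ?_, by simp, rfl, rfl, ?_⟩
      · refine List.isChain_cons_cons.mpr ⟨(SimpleGraph.mem_neighborFinset _ _ _).mp hyA, ?_⟩
        refine List.isChain_cons_cons.mpr ⟨G.adj_symm ((SimpleGraph.mem_neighborFinset _ _ _).mp hyB), ?_⟩
        exact List.isChain_singleton _
      · simp only [List.nodup_cons, List.mem_cons, List.mem_singleton, List.not_mem_nil]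
        refine ⟨?_, ?_, by simp⟩
        · push_neg
          exact ⟨hne hx hyY, hxx', by simp⟩
        · push_neg
          exact ⟨fun h => hne hx' hyY h.symm, by simp⟩
      · intro v hv
        rcases List.mem_cons.mp hv with rfl | hv
        · exact ⟨Or.inl hx, hxF⟩
        rcases List.mem_cons.mp hv with rfl | hv
        · exact ⟨Or.inr hyY, hyF⟩
        rcases List.mem_cons.mp hv with rfl | hv
        · exact ⟨Or.inl hx', hx'F⟩
        · simp at hv
    · have hj1 : 1 ≤ j := by omega
      obtain ⟨y, hyY, hyNx, -, hyrest⟩ := pick_common Y (G.neighborFinset x)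
        (G.neighborFinset x) (F ∪ {x'}) β γ (hX x hx) (hX x hx)
        (by
          have := Finset.card_union_le F ({x'} : Finset V)
          simp only [Finset.card_singleton] at this
          omega) hYc
      obtain ⟨x₁, hx₁X, hx₁Ny, -, hx₁rest⟩ := pick_common X (G.neighborFinset y)
        (G.neighborFinset y) (F ∪ {x, x'}) β γ (hY y hyY) (hY y hyY)
        (by
          have := Finset.card_union_le F ({x, x'} : Finset V)
          have : ({x, x'} : Finset V).card ≤ 2 := Finset.card_le_two
          have := Finset.card_union_le F ({x, x'} : Finset V)
          omega) hXc
      have hyF : y ∉ F := fun h => hyrest (Finset.mem_union_left _ h)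
      have hyx' : y ≠ x' := fun h => hyrest (by simp [h])
      have hx₁F : x₁ ∉ F := fun h => hx₁rest (Finset.mem_union_left _ h)
      have hx₁x : x₁ ≠ x := fun h => hx₁rest (by simp [h])
      have hx₁x' : x₁ ≠ x' := fun h => hx₁rest (by simp [h])
      set F' := insert x (insert y F) with hF'
      have hF'card : F'.card ≤ F.card + 2 := by
        refine le_trans (Finset.card_insert_le _ _) ?_
        have := Finset.card_insert_le y F
        omega
      obtain ⟨l₁, hch₁, hnd₁, hlen₁, hhd₁, hlast₁, hmem₁⟩ := ihj hj1 F' x₁ x' hx₁X hx' hx₁x'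
        (by
          intro h
          rcases Finset.mem_insert.mp h with h | h
          · exact hx₁x h
          rcases Finset.mem_insert.mp h with h | h
          · exact hne hx₁X hyY h
          · exact hx₁F h)
        (by
          intro h
          rcases Finset.mem_insert.mp h with h | h
          · exact hxx' h.symm
          rcases Finset.mem_insert.mp h with h | h
          · exact hyx' h.symm
          · exact hx'F h)
        (by omega)
      have hxl₁ : x ∉ l₁ := fun h => (hmem₁ x h).2 (Finset.mem_insert_self _ _)
      have hyl₁ : y ∉ l₁ := fun h => (hmem₁ y h).2 (Finset.mem_insert_of_mem (Finset.mem_insert_self _ _))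
      obtain ⟨c0, r, rfl⟩ := List.exists_cons_of_ne_nil
        (show l₁ ≠ [] by intro h; rw [h] at hlen₁; simp at hlen₁)
      have hc0 : c0 = x₁ := by simpa using hhd₁
      refine ⟨x :: y :: c0 :: r, ?_, ?_, ?_, rfl, ?_, ?_⟩
      · refine List.isChain_cons_cons.mpr ⟨(SimpleGraph.mem_neighborFinset _ _ _).mp hyNx, ?_⟩
        refine List.isChain_cons_cons.mpr ⟨?_, hch₁⟩
        rw [hc0]
        exact (SimpleGraph.mem_neighborFinset _ _ _).mp hx₁Ny
      · rw [List.nodup_cons, List.nodup_cons]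
        refine ⟨?_, ?_, hnd₁⟩
        · intro h
          rcases List.mem_cons.mp h with h | h
          · exact hne hx hyY h
          · exact hxl₁ h
        · exact hyl₁
      · simp only [List.length_cons] at hlen₁ ⊢
        omega
      · rw [show (x :: y :: c0 :: r).getLast? = (c0 :: r).getLast? by
          rw [List.getLast?_cons_cons, List.getLast?_cons_cons]]
        exact hlast₁
      · intro v hv
        rcases List.mem_cons.mp hv with rfl | hv
        · exact ⟨Or.inl hx, hxF⟩
        rcases List.mem_cons.mp hv with rfl | hv
        · exact ⟨Or.inr hyY, hyF⟩
        · exact ⟨(hmem₁ v hv).1, fun h => (hmem₁ v hv).2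
            (Finset.mem_insert_of_mem (Finset.mem_insert_of_mem h))⟩

end Greedy

open Finset List SimpleGraph in
set_option maxHeartbeats 1000000 in
lemma main_comb {n : ℕ} (hn : 1000000 ≤ n) (G : SimpleGraph (Fin n)) [DecidableRel G.Adj]
    (w : Fin n) (hD : n ^ 2 / 4 + 1 ≤ ∑ u ∈ G.neighborFinset w, G.degree u)
    (t : ℕ) (ht3 : 3 ≤ t) (htn : 160 * t ≤ n) :
    ∃ (v : Fin n) (c : G.Walk v v), c.IsCycle ∧ c.length = t := by
  classical
  set S := G.neighborFinset w with hS
  set s := S.card with hs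
  have hwS : w ∉ S := by simp [hS]
  have hsle : s ≤ n := by
    calc s ≤ Fintype.card (Fin n) := Finset.card_le_univ S
      _ = n := Fintype.card_fin n
  -- basic degree split
  have hdeg : ∀ u : Fin n, (S ∩ G.neighborFinset u).card + (Sᶜ ∩ G.neighborFinset u).card
      = G.degree u := by
    intro u
    rw [Finset.inter_comm S, Finset.inter_comm Sᶜ, ← Finset.sdiff_eq_inter_compl,
      Finset.card_inter_add_card_sdiff]
    rfl
  set P := ∑ u ∈ S, (S ∩ G.neighborFinset u).card with hP
  set Q := ∑ u ∈ S, (Sᶜ ∩ G.neighborFinset u).card with hQ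
  have hPQ : n ^ 2 / 4 + 1 ≤ P + Q := by
    rw [hP, hQ, ← Finset.sum_add_distrib]
    calc n ^ 2 / 4 + 1 ≤ ∑ u ∈ S, G.degree u := hD
      _ = _ := Finset.sum_congr rfl fun u _ => (hdeg u).symm
  -- double counting : Q = sum over complement
  have hQ' : Q = ∑ y ∈ Sᶜ, (S ∩ G.neighborFinset y).card := by
    rw [hQ]
    rw [Finset.sum_congr rfl fun u (_ : u ∈ S) => card_inter_nbr G Sᶜ u]
    rw [Finset.sum_congr rfl fun y (_ : y ∈ Sᶜ) => card_inter_nbr G S y]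
    rw [Finset.sum_comm]
    refine Finset.sum_congr rfl fun y _ => Finset.sum_congr rfl fun u _ => ?_
    by_cases h : G.Adj u y
    · simp [h, G.adj_symm h]
    · have h' : ¬ G.Adj y u := fun hh => h (G.adj_symm hh)
      simp [h, h']
  have hcompl : Sᶜ.card = n - s := by
    rw [Finset.card_compl, Fintype.card_fin, hs]
  -- M and M'
  set M := ∑ y ∈ Sᶜ, (s - (S ∩ G.neighborFinset y).card) with hM
  set M' := ∑ u ∈ S, ((n - s) - (Sᶜ ∩ G.neighborFinset u).card) with hM'
  have hdSle : ∀ y : Fin n, (S ∩ G.neighborFinset y).card ≤ s :=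
    fun y => Finset.card_le_card (Finset.inter_subset_left)
  have hdCle : ∀ u : Fin n, (Sᶜ ∩ G.neighborFinset u).card ≤ n - s := by
    intro u
    rw [← hcompl]
    exact Finset.card_le_card (Finset.inter_subset_left)
  have hMQ : M + Q = s * (n - s) := by
    rw [hM, hQ', ← Finset.sum_add_distrib]
    rw [Finset.sum_congr rfl fun y (_ : y ∈ Sᶜ) => Nat.sub_add_cancel (hdSle y)]
    rw [Finset.sum_const, hcompl, smul_eq_mul, Nat.mul_comm]
  have hM'Q : M' + Q = s * (n - s) := by
    rw [hM', hQ, ← Finset.sum_add_distrib]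
    rw [Finset.sum_congr rfl fun u (_ : u ∈ S) => Nat.sub_add_cancel (hdCle u)]
    rw [Finset.sum_const, smul_eq_mul]
  -- arithmetic facts
  have hsd : 4 * (s * (n - s)) ≤ n ^ 2 := by
    have h1 : (4 : ℤ) * (s * (n - s : ℕ)) ≤ (n : ℤ) ^ 2 := by
      have hd : (s : ℤ) + ((n - s : ℕ) : ℤ) = n := by
        push_cast [Nat.cast_sub hsle]; ring
      nlinarith [sq_nonneg ((s : ℤ) - ((n - s : ℕ) : ℤ))]
    exact_mod_cast h1
  have hfloor : n ^ 2 ≤ 4 * (n ^ 2 / 4) + 3 := by omega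
  have hPM : M + 1 ≤ P := by omega
  have hPM' : M' + 1 ≤ P := by omega
  -- case threshold
  set c := n / 160 + 1 with hc
  have htc : t ≤ n / 160 := by omega
  by_cases hcase : 2 * c * n + 2 ≤ P
  · -- CASE 1 : dense neighbourhood
    have hPs : 2 * c * S.card + 2 ≤ P := by
      have : 2 * c * S.card ≤ 2 * c * n := Nat.mul_le_mul_left _ hsle
      omega
    obtain ⟨W, hWS, hWne, hWdeg⟩ := exists_min_deg_subset G c S hPs
    obtain ⟨a, l, hnd, hlen, hch, hmem⟩ := exists_path_list W c hWdeg hWne (t - 1)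
      (by omega) (by omega)
    rw [List.length_cons] at hlen
    have hWsub : ∀ v ∈ a :: l, v ∈ S := fun v hv => hWS (hmem v hv)
    have hLne : (w :: a :: l) ≠ [] := by simp
    have hlast_mem : (w :: a :: l).getLast hLne ∈ a :: l := by
      rw [List.getLast_cons (by simp)]
      exact List.getLast_mem _
    refine (exists_cycle_of_list G (w :: a :: l) ?_ ?_ ?_ hLne ?_).imp
      fun v ⟨cyc, hcyc, hclen⟩ => ⟨cyc, hcyc, by
        rw [hclen]
        simp only [List.length_cons]
        omega⟩
    · rw [List.nodup_cons]
      exact ⟨fun h => hwS (hWsub _ h), hnd⟩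
    · simp only [List.length_cons]; omega
    · refine List.isChain_cons_cons.mpr ⟨?_, hch⟩
      exact (SimpleGraph.mem_neighborFinset _ _ _).mp (hWsub a (by simp))
    · have h1 : (w :: a :: l).head hLne = w := rfl
      rw [h1]
      exact G.adj_symm ((SimpleGraph.mem_neighborFinset _ _ _).mp (hWsub _ hlast_mem))
  · -- CASE 2 : stability
    push_neg at hcase
    obtain ⟨β, hβ⟩ : ∃ β, β = 23 * n / 200 := ⟨_, rfl⟩
    obtain ⟨γ, hγ⟩ : ∃ γ, γ = n / 100 := ⟨_, rfl⟩
    set X := S.filter (fun u => n - s ≤ (Sᶜ ∩ G.neighborFinset u).card + β) with hX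
    set BS := S.filter (fun u => ¬ (n - s ≤ (Sᶜ ∩ G.neighborFinset u).card + β)) with hBS
    have hXBS : X.card + BS.card = s := by
      rw [hX, hBS, hs]
      exact Finset.card_filter_add_card_filter_not _
    have hBSM : BS.card * (β + 1) ≤ M' := by
      rw [hM']
      calc BS.card * (β + 1) = ∑ _u ∈ BS, (β + 1) := by
            rw [Finset.sum_const, smul_eq_mul, Nat.mul_comm]
        _ ≤ ∑ u ∈ BS, ((n - s) - (Sᶜ ∩ G.neighborFinset u).card) := by
            refine Finset.sum_le_sum fun u hu => ?_
            rw [hBS, Finset.mem_filter] at hu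
            have := hdCle u
            omega
        _ ≤ ∑ u ∈ S, ((n - s) - (Sᶜ ∩ G.neighborFinset u).card) := by
            refine Finset.sum_le_sum_of_subset ?_
            rw [hBS]; exact Finset.filter_subset _ _
    set T := Sᶜ.erase w with hT
    have hwSc : w ∈ Sᶜ := Finset.mem_compl.mpr hwS
    have hTcard : T.card + 1 = n - s := by
      rw [hT, Finset.card_erase_of_mem hwSc]
      have : 0 < Sᶜ.card := Finset.card_pos.mpr ⟨w, hwSc⟩
      omega
    set Y := T.filter (fun y => s ≤ (S ∩ G.neighborFinset y).card + β) with hY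
    set BT := Sᶜ.filter (fun y => ¬ (s ≤ (S ∩ G.neighborFinset y).card + β)) with hBT
    have hBTM : BT.card * (β + 1) ≤ M := by
      rw [hM]
      calc BT.card * (β + 1) = ∑ _y ∈ BT, (β + 1) := by
            rw [Finset.sum_const, smul_eq_mul, Nat.mul_comm]
        _ ≤ ∑ y ∈ BT, (s - (S ∩ G.neighborFinset y).card) := by
            refine Finset.sum_le_sum fun y hy => ?_
            rw [hBT, Finset.mem_filter] at hy
            have := hdSle y
            omega
        _ ≤ ∑ y ∈ Sᶜ, (s - (S ∩ G.neighborFinset y).card) := by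
            refine Finset.sum_le_sum_of_subset ?_
            rw [hBT]; exact Finset.filter_subset _ _
    have hYT : Y.card + BT.card + 1 + s ≥ n := by
      have h1 : T.filter (fun y => ¬ (s ≤ (S ∩ G.neighborFinset y).card + β)) ⊆ BT := by
        rw [hT, hBT]
        exact Finset.filter_subset_filter _ (Finset.erase_subset _ _)
      have h2 : Y.card + (T.filter (fun y => ¬ (s ≤ (S ∩ G.neighborFinset y).card + β))).card
          = T.card := by
        rw [hY]
        exact Finset.card_filter_add_card_filter_not _
      have h3 := Finset.card_le_card h1
      omega
    -- membership helpers
    have hXS : ∀ x ∈ X, x ∈ S := by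
      intro x hx
      rw [hX, Finset.mem_filter] at hx
      exact hx.1
    have hYprop : ∀ y ∈ Y, y ∈ Sᶜ ∧ y ≠ w := by
      intro y hy
      rw [hY, Finset.mem_filter, hT, Finset.mem_erase] at hy
      exact ⟨hy.1.2, hy.1.1⟩
    have hnotw : ∀ v : Fin n, (v ∈ X ∨ v ∈ Y) → v ≠ w := by
      rintro v (hv | hv) rfl
      · exact hwS (hXS _ hv)
      · exact (hYprop _ hv).2 rfl
    have hXYd : Disjoint X Y := by
      rw [Finset.disjoint_left]
      intro v hvX hvY
      exact (Finset.mem_compl.mp (hYprop v hvY).1) (hXS v hvX)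
    have hXdeg : ∀ x ∈ X, (Y \ G.neighborFinset x).card ≤ β := by
      intro x hx
      have hgood : n - s ≤ (Sᶜ ∩ G.neighborFinset x).card + β := by
        rw [hX, Finset.mem_filter] at hx
        exact hx.2
      have hsub : Y \ G.neighborFinset x ⊆ Sᶜ \ G.neighborFinset x := by
        refine Finset.sdiff_subset_sdiff ?_ subset_rfl
        intro y hy
        exact (hYprop y hy).1
      have hcard2 : (Sᶜ ∩ G.neighborFinset x).card + (Sᶜ \ G.neighborFinset x).card = n - s := by
        rw [Finset.card_inter_add_card_sdiff, hcompl]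
      have := Finset.card_le_card hsub
      omega
    have hYdeg : ∀ y ∈ Y, (X \ G.neighborFinset y).card ≤ β := by
      intro y hy
      have hgood : s ≤ (S ∩ G.neighborFinset y).card + β := by
        rw [hY, Finset.mem_filter] at hy
        exact hy.2
      have hsub : X \ G.neighborFinset y ⊆ S \ G.neighborFinset y := by
        refine Finset.sdiff_subset_sdiff ?_ subset_rfl
        intro x hx
        exact hXS x hx
      have hcard2 : (S ∩ G.neighborFinset y).card + (S \ G.neighborFinset y).card = s := by
        rw [Finset.card_inter_add_card_sdiff, hs]
      have := Finset.card_le_card hsub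
      omega
    -- numeric bounds
    have hsdZ : ((s * (n - s) : ℕ) : ℤ) = (s:ℤ) * ((n:ℤ) - s) := by
      push_cast [Nat.cast_sub hsle]; ring
    have hQle : Q ≤ s * (n - s) := by omega
    have hnZ : (1000000:ℤ) ≤ (n:ℤ) := by exact_mod_cast hn
    have hn2Z : 1000000 * (n:ℤ) ≤ (n:ℤ)^2 := by nlinarith
    have himb : ((n:ℤ) - 2*(s:ℤ))^2 + 1 ≤ 4 * (P:ℤ) := by
      have h2 : (Q:ℤ) ≤ (s:ℤ) * ((n:ℤ) - s) := by rw [← hsdZ]; exact_mod_cast hQle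
      have h3 : ((n:ℤ))^2 ≤ 4*((n^2/4 : ℕ):ℤ) + 3 := by exact_mod_cast hfloor
      have h4 : ((n^2/4:ℕ):ℤ) + 1 ≤ (P:ℤ) + (Q:ℤ) := by exact_mod_cast hPQ
      nlinarith [h2, h3, h4]
    have hPZ : 80 * (P:ℤ) ≤ (n:ℤ)^2 + 160*(n:ℤ) + 80 := by
      have hcase' : (P:ℤ) < 2*(c:ℤ)*(n:ℤ) + 2 := by exact_mod_cast hcase
      have hcP : (P:ℤ) ≤ 2*(c:ℤ)*(n:ℤ) + 1 := by linarith
      have hcZ : 160 * (c:ℤ) ≤ (n:ℤ) + 160 := by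
        have : 160 * c ≤ n + 160 := by omega
        exact_mod_cast this
      nlinarith [mul_le_mul_of_nonneg_right hcZ (by positivity : (0:ℤ) ≤ (n:ℤ))]
    have hslow : 31 * n ≤ 80 * s := by
      by_contra hcon
      push_neg at hcon
      have hconZ : 80*(s:ℤ) + 1 ≤ 31*(n:ℤ) := by exact_mod_cast hcon
      have h9 : 9*(n:ℤ) + 1 ≤ 40*((n:ℤ) - 2*s) := by linarith
      have h9sq : 81*(n:ℤ)^2 + 18*(n:ℤ) + 1 ≤ 1600*((n:ℤ) - 2*(s:ℤ))^2 := by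
        have h := mul_self_le_mul_self (by linarith : (0:ℤ) ≤ 9*(n:ℤ)+1) h9
        calc 81*(n:ℤ)^2 + 18*(n:ℤ) + 1 = (9*(n:ℤ)+1) * (9*(n:ℤ)+1) := by ring
          _ ≤ (40*((n:ℤ) - 2*s)) * (40*((n:ℤ) - 2*s)) := h
          _ = 1600*((n:ℤ) - 2*(s:ℤ))^2 := by ring
      linarith [himb, hPZ, h9sq, hn2Z, hnZ]
    have hshigh : 80 * s ≤ 49 * n := by
      by_contra hcon
      push_neg at hcon
      have hconZ : 49*(n:ℤ) + 1 ≤ 80*(s:ℤ) := by exact_mod_cast hcon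
      have h9 : 9*(n:ℤ) + 1 ≤ 40*(2*(s:ℤ) - n) := by linarith
      have h9sq : 81*(n:ℤ)^2 + 18*(n:ℤ) + 1 ≤ 1600*((n:ℤ) - 2*(s:ℤ))^2 := by
        have h := mul_self_le_mul_self (by linarith : (0:ℤ) ≤ 9*(n:ℤ)+1) h9
        calc 81*(n:ℤ)^2 + 18*(n:ℤ) + 1 = (9*(n:ℤ)+1) * (9*(n:ℤ)+1) := by ring
          _ ≤ (40*(2*(s:ℤ) - n)) * (40*(2*(s:ℤ) - n)) := h
          _ = 1600*((n:ℤ) - 2*(s:ℤ))^2 := by ring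
      linarith [himb, hPZ, h9sq, hn2Z, hnZ]
    have h200 : 23*(n:ℤ) + 1 ≤ 200*((β:ℤ)+1) := by
      have : 23*n + 1 ≤ 200*(β+1) := by omega
      exact_mod_cast this
    have hBS100 : 100 * BS.card ≤ 11 * n := by
      have hbz : (0:ℤ) ≤ (BS.card:ℤ) := Int.natCast_nonneg _
      have h1 : (BS.card:ℤ) * (23*(n:ℤ)+1) ≤ (BS.card:ℤ) * (200*((β:ℤ)+1)) :=
        mul_le_mul_of_nonneg_left h200 hbz
      have h2 : (BS.card:ℤ) * ((β:ℤ)+1) ≤ (M':ℤ) := by exact_mod_cast hBSM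
      have h3 : (M':ℤ) + 1 ≤ (P:ℤ) := by exact_mod_cast hPM'
      by_contra hcon
      push_neg at hcon
      have hconZ : 11*(n:ℤ) + 1 ≤ 100*(BS.card:ℤ) := by exact_mod_cast hcon
      have h4 := mul_le_mul_of_nonneg_right hconZ (by linarith : (0:ℤ) ≤ 23*(n:ℤ)+1)
      ring_nf at h1 h2 h4
      linarith [h1, h2, h3, hPZ, h4, hn2Z, hnZ]
    have hBT100 : 100 * BT.card ≤ 11 * n := by
      have hbz : (0:ℤ) ≤ (BT.card:ℤ) := Int.natCast_nonneg _
      have h1 : (BT.card:ℤ) * (23*(n:ℤ)+1) ≤ (BT.card:ℤ) * (200*((β:ℤ)+1)) :=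
        mul_le_mul_of_nonneg_left h200 hbz
      have h2 : (BT.card:ℤ) * ((β:ℤ)+1) ≤ (M:ℤ) := by exact_mod_cast hBTM
      have h3 : (M:ℤ) + 1 ≤ (P:ℤ) := by exact_mod_cast hPM
      by_contra hcon
      push_neg at hcon
      have hconZ : 11*(n:ℤ) + 1 ≤ 100*(BT.card:ℤ) := by exact_mod_cast hcon
      have h4 := mul_le_mul_of_nonneg_right hconZ (by linarith : (0:ℤ) ≤ 23*(n:ℤ)+1)
      ring_nf at h1 h2 h4
      linarith [h1, h2, h3, hPZ, h4, hn2Z, hnZ]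
    have hXcard : 2 * β + γ + 1 ≤ X.card := by omega
    have hYcard : 2 * β + γ + 1 ≤ Y.card := by omega
    -- a good internal edge exists
    by_cases hedge : ∃ a ∈ X, ∃ b ∈ S, G.Adj a b
    swap
    · exfalso
      push_neg at hedge
      have hall : ∀ u ∈ S, ∀ v, G.Adj u v → v ∈ S → u ∈ BS := by
        intro u huS v hadj hvS
        by_contra huBS
        have huX : u ∈ X := by
          rw [hX, Finset.mem_filter]
          refine ⟨huS, ?_⟩
          by_contra hbad
          exact huBS (by rw [hBS, Finset.mem_filter]; exact ⟨huS, hbad⟩)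
        exact hedge u huX v hvS hadj
      have hPle : P ≤ BS.card * BS.card := by
        have hBSsub : BS ⊆ S := by rw [hBS]; exact Finset.filter_subset _ _
        have hvanish : ∀ x ∈ S, x ∉ BS → (S ∩ G.neighborFinset x).card = 0 := by
          intro x hxS hxBS
          rw [Finset.card_eq_zero]
          rw [Finset.eq_empty_iff_forall_notMem]
          intro v hv
          simp only [Finset.mem_inter, SimpleGraph.mem_neighborFinset] at hv
          exact hxBS (hall x hxS v hv.2 hv.1)
        have heq : ∑ u ∈ BS, (S ∩ G.neighborFinset u).card = P := by
          rw [hP]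
          exact Finset.sum_subset hBSsub hvanish
        rw [← heq]
        calc ∑ u ∈ BS, (S ∩ G.neighborFinset u).card ≤ ∑ _u ∈ BS, BS.card := by
              refine Finset.sum_le_sum fun u hu => ?_
              refine Finset.card_le_card ?_
              intro v hv
              simp only [Finset.mem_inter, SimpleGraph.mem_neighborFinset] at hv
              exact hall v hv.1 u (G.adj_symm hv.2) (hBSsub hu)
          _ = BS.card * BS.card := by rw [Finset.sum_const, smul_eq_mul]
      -- numeric contradiction
      have hb2 : β + 2 ≤ BS.card := by
        rcases Nat.lt_or_ge BS.card (β + 2) with h | h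
        · exfalso
          have h1 : BS.card * BS.card ≤ BS.card * (β + 1) :=
            Nat.mul_le_mul_left _ (by omega)
          omega
        · exact h
      have h2 : ((β:ℤ)+1) * ((β:ℤ)+1) ≤ (BS.card:ℤ) * ((β:ℤ)+1) := by
        have : (β+1) * (β+1) ≤ BS.card * (β+1) := Nat.mul_le_mul_right _ (by omega)
        exact_mod_cast this
      have h2' : (BS.card:ℤ) * ((β:ℤ)+1) ≤ (M':ℤ) := by exact_mod_cast hBSM
      have h3 : (M':ℤ) + 1 ≤ (P:ℤ) := by exact_mod_cast hPM'
      have hsq : (23*(n:ℤ)+1) * (23*(n:ℤ)+1) ≤ 40000 * (((β:ℤ)+1) * ((β:ℤ)+1)) := by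
        have h := mul_self_le_mul_self (by linarith : (0:ℤ) ≤ 23*(n:ℤ)+1) h200
        calc (23*(n:ℤ)+1) * (23*(n:ℤ)+1) ≤ (200*((β:ℤ)+1)) * (200*((β:ℤ)+1)) := h
          _ = 40000 * (((β:ℤ)+1) * ((β:ℤ)+1)) := by ring
      ring_nf at hsq h2 h2'
      linarith [h2, h2', h3, hPZ, hsq, hn2Z, hnZ]
    · obtain ⟨a, haX, b, hbS, hab⟩ := hedge
      have hanb : a ≠ b := G.ne_of_adj hab
      have haS : a ∈ S := hXS a haX
      by_cases ht3' : t = 3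
      · subst ht3'
        refine (exists_cycle_of_list G [w, b, a] ?_ (by simp) ?_ (by simp) ?_).imp
          fun v ⟨cyc, hcyc, hclen⟩ => ⟨cyc, hcyc, by rw [hclen]; rfl⟩
        · simp only [List.nodup_cons, List.mem_cons, List.mem_singleton, List.not_mem_nil,
            or_false, not_or]
          refine ⟨⟨?_, ?_⟩, ?_, by simp⟩
          · rintro rfl; exact hwS hbS
          · rintro rfl; exact hwS haS
          · exact fun h => hanb h.symm
        · refine List.isChain_cons_cons.mpr ⟨(SimpleGraph.mem_neighborFinset _ _ _).mp hbS, ?_⟩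
          refine List.isChain_cons_cons.mpr ⟨G.adj_symm hab, ?_⟩
          exact List.isChain_singleton _
        · show G.Adj ([w, b, a].getLast (by simp)) ([w, b, a].head (by simp))
          have h1 : [w, b, a].getLast (by simp) = a := rfl
          have h2 : [w, b, a].head (by simp) = w := rfl
          rw [h1, h2]
          exact G.adj_symm ((SimpleGraph.mem_neighborFinset _ _ _).mp haS)
      · -- t ≥ 4 : use the connector
        have ht4 : 4 ≤ t := by omega
        -- pick x' in X, different from a and b
        have hxpick : 0 < (X \ {a, b}).card := by
          have h1 : X.card ≤ (X \ {a, b}).card + ({a, b} : Finset (Fin n)).card :=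
            Finset.card_le_card_sdiff_add_card
          have h2 : ({a, b} : Finset (Fin n)).card ≤ 2 := Finset.card_le_two
          omega
        obtain ⟨x', hx'⟩ := Finset.card_pos.mp hxpick
        rw [Finset.mem_sdiff] at hx'
        have hx'X : x' ∈ X := hx'.1
        have hx'a : x' ≠ a := fun h => hx'.2 (by simp [h])
        have hx'b : x' ≠ b := fun h => hx'.2 (by simp [h])
        have hx'S : x' ∈ S := hXS x' hx'X
        rcases Nat.even_or_odd t with hpar | hpar
        · -- even : cycle w :: (path a … x')
          obtain ⟨j, hj⟩ : ∃ j, t = 2 * j + 2 := by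
            obtain ⟨k, hk⟩ := hpar; exact ⟨k - 1, by omega⟩
          obtain ⟨l, hch, hnd, hlen, hhd, hlast, hmemb⟩ := connector X Y β γ hXYd hXdeg hYdeg
            hYcard hXcard j (by omega) ∅ a x' haX hx'X (fun h => hx'a h.symm)
            (Finset.notMem_empty _) (Finset.notMem_empty _) (by simp; omega)
          have hlne : l ≠ [] := by intro h; rw [h] at hlen; simp at hlen
          obtain ⟨a₀, rest, rfl⟩ := List.exists_cons_of_ne_nil hlne
          have ha₀ : a₀ = a := by simpa using hhd
          subst ha₀
          have hlastv : (a₀ :: rest).getLast (by simp) = x' := by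
            have h1 := List.getLast?_eq_getLast (l := a₀ :: rest) (by simp)
            rw [hlast] at h1
            exact (Option.some.inj h1).symm
          refine (exists_cycle_of_list G (w :: a₀ :: rest) ?_ ?_ ?_ (by simp) ?_).imp
            fun v ⟨cyc, hcyc, hclen⟩ => ⟨cyc, hcyc, by
              rw [hclen]; simp only [List.length_cons] at hlen ⊢; omega⟩
          · rw [List.nodup_cons]
            refine ⟨fun h => hnotw w ((hmemb w h).1) rfl, hnd⟩
          · simp only [List.length_cons] at hlen ⊢; omega
          · refine List.isChain_cons_cons.mpr ⟨?_, hch⟩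
            exact (SimpleGraph.mem_neighborFinset _ _ _).mp haS
          · have h1 : (w :: a₀ :: rest).getLast (by simp) = x' := by
              rw [List.getLast_cons (by simp : (a₀ :: rest) ≠ [])]
              exact hlastv
            have h2 : (w :: a₀ :: rest).head (by simp) = w := rfl
            rw [h1, h2]
            exact G.adj_symm ((SimpleGraph.mem_neighborFinset _ _ _).mp hx'S)
        · -- odd : cycle w :: b :: (path a … x')
          obtain ⟨j, hj⟩ : ∃ j, t = 2 * j + 3 := by
            obtain ⟨k, hk⟩ := hpar; exact ⟨k - 1, by omega⟩
          obtain ⟨l, hch, hnd, hlen, hhd, hlast, hmemb⟩ := connector X Y β γ hXYd hXdeg hYdeg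
            hYcard hXcard j (by omega) {b} a x' haX hx'X (fun h => hx'a h.symm)
            (by simp [hanb]) (by simp [hx'b]) (by simp; omega)
          have hlne : l ≠ [] := by intro h; rw [h] at hlen; simp at hlen
          obtain ⟨a₀, rest, rfl⟩ := List.exists_cons_of_ne_nil hlne
          have ha₀ : a₀ = a := by simpa using hhd
          subst ha₀
          have hlastv : (a₀ :: rest).getLast (by simp) = x' := by
            have h1 := List.getLast?_eq_getLast (l := a₀ :: rest) (by simp)
            rw [hlast] at h1
            exact (Option.some.inj h1).symm
          have hbl : b ∉ a₀ :: rest := by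
            intro h
            exact (hmemb b h).2 (Finset.mem_singleton_self b)
          refine (exists_cycle_of_list G (w :: b :: a₀ :: rest) ?_ ?_ ?_ (by simp) ?_).imp
            fun v ⟨cyc, hcyc, hclen⟩ => ⟨cyc, hcyc, by
              rw [hclen]; simp only [List.length_cons] at hlen ⊢; omega⟩
          · rw [List.nodup_cons, List.nodup_cons]
            refine ⟨?_, hbl, hnd⟩
            intro h
            rcases List.mem_cons.mp h with h | h
            · exact hwS (h ▸ hbS)
            · exact hnotw w ((hmemb w h).1) rfl
          · simp only [List.length_cons] at hlen ⊢; omega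
          · refine List.isChain_cons_cons.mpr ⟨(SimpleGraph.mem_neighborFinset _ _ _).mp hbS, ?_⟩
            refine List.isChain_cons_cons.mpr ⟨G.adj_symm hab, hch⟩
          · have h1 : (w :: b :: a₀ :: rest).getLast (by simp) = x' := by
              rw [List.getLast_cons (by simp : (b :: a₀ :: rest) ≠ [])]
              rw [List.getLast_cons (by simp : (a₀ :: rest) ≠ [])]
              exact hlastv
            have h2 : (w :: b :: a₀ :: rest).head (by simp) = w := rfl
            rw [h1, h2]
            exact G.adj_symm ((SimpleGraph.mem_neighborFinset _ _ _).mp hx'S)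


/-- There is an `N` such that every graph on `n ≥ N` vertices whose adjacency-matrix
spectral radius exceeds `√⌊n²/4⌋` contains a cycle of length `t` for every
`3 ≤ t ≤ n/160`. -/
theorem cycles_of_spectral_radius :
    ∃ N : ℕ, ∀ n : ℕ, N ≤ n → ∀ G : SimpleGraph (Fin n),
      Real.sqrt ((n ^ 2 / 4 : ℕ) : ℝ) < specRad G →
      ∀ t : ℕ, 3 ≤ t → (t : ℝ) ≤ (n : ℝ) / 160 →
        ∃ (v : Fin n) (c : G.Walk v v), c.IsCycle ∧ c.length = t := by
  refine ⟨1000000, ?_⟩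
  intro n hn G hspec t ht3 htreal
  classical
  have htn : 160 * t ≤ n := by
    have h1 : (160 : ℝ) * t ≤ n := by linarith
    exact_mod_cast h1
  obtain ⟨w, hD⟩ := step1 (by omega) G hspec
  exact main_comb hn G w hD t ht3 htn
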